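/- Let Γ be a countable dense subgroup of a locally compact second countable group G with left Haar measure m_G. Assume the left translation action Γ ↷ (G, m_G) has local spectral gap with respect to some compact set B₀ ⊂ G with non-empty interior. Then for every compact set K ⊂ G there exist a finite set F ⊂ Γ and a constant κ > 0 such that sup_{g∈K} ‖λ(g)φ − φ‖₂ ≤ κ·max_{g∈F} ‖λ(g)φ − φ‖₂ for every φ ∈ L²(G, m_G). -/

import Mathlib

open MeasureTheory NNReal ENNReal Filter Topology Pointwise

noncomputable section

def HasLocalSpectralGap {G : Type} [Group G] [MeasurableSpace G] (Γ : Subgroup G)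
    (m : Measure G) (B : Set G) : Prop :=
  ∃ (F : Finset Γ) (κ : ℝ≥0), 0 < κ ∧
    ∀ φ : G → ℂ, MemLp φ 2 m → (∫ x in B, φ x ∂m) = 0 →
      eLpNorm φ 2 (m.restrict B) ≤ (κ : ℝ≥0∞) *
        F.sup fun γ => eLpNorm (fun x => φ ((γ : G)⁻¹ * x) - φ x) 2 (m.restrict B)

namespace LocalGapAux

lemma sqrt_sq (x : ℝ≥0∞) : (x ^ 2) ^ ((2:ℝ)⁻¹) = x := by
  rw [← ENNReal.rpow_natCast x 2, ← ENNReal.rpow_mul]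
  norm_num

lemma sq_sqrt (x : ℝ≥0∞) : (x ^ ((2:ℝ)⁻¹)) ^ 2 = x := by
  rw [← ENNReal.rpow_natCast _ 2, ← ENNReal.rpow_mul]
  norm_num

lemma sup_sq {α : Type*} (F : Finset α) (f : α → ℝ≥0∞) :
    F.sup f ^ 2 = F.sup fun a => f a ^ 2 := by
  have := Finset.comp_sup_eq_sup_comp (g := fun x : ℝ≥0∞ => x ^ 2) (s := F) (f := f)
    (fun x y => by
      rcases le_total x y with h | h
      · simp [max_eq_right h, max_eq_right (pow_le_pow_left' h 2)]
      · simp [max_eq_left h, max_eq_left (pow_le_pow_left' h 2)])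
    (by simp)
  simpa [Function.comp_def] using this

lemma add_sq_le (x y : ℝ≥0∞) : (x + y) ^ 2 ≤ 4 * x ^ 2 + 4 * y ^ 2 := by
  have h : x + y ≤ 2 * max x y := by
    rw [two_mul]; exact add_le_add (le_max_left x y) (le_max_right x y)
  calc (x + y) ^ 2 ≤ (2 * max x y) ^ 2 := pow_le_pow_left' h 2
    _ = 4 * (max x y) ^ 2 := by ring
    _ ≤ 4 * (x ^ 2 + y ^ 2) := by
        gcongr
        rcases le_total x y with h' | h'
        · rw [max_eq_right h']; exact le_add_self
        · rw [max_eq_left h']; exact le_self_add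
    _ = 4 * x ^ 2 + 4 * y ^ 2 := by ring

lemma sq_diff_le (a b c : ℂ) :
    (‖a - b‖₊ : ℝ≥0∞) ^ 2 ≤ 4 * (‖a - c‖₊ : ℝ≥0∞) ^ 2 + 4 * (‖c - b‖₊ : ℝ≥0∞) ^ 2 := by
  have h1 : (‖a - b‖₊ : ℝ≥0∞) ≤ (‖a - c‖₊ : ℝ≥0∞) + (‖c - b‖₊ : ℝ≥0∞) := by
    have := nnnorm_add_le (a - c) (c - b)
    rw [sub_add_sub_cancel] at this
    exact_mod_cast this
  exact le_trans (pow_le_pow_left' h1 2) (add_sq_le _ _)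

lemma lint_eq {α : Type*} [MeasurableSpace α] (μ : Measure α) (f : α → ℂ) :
    ∫⁻ x, (‖f x‖₊ : ℝ≥0∞) ^ 2 ∂μ = eLpNorm f 2 μ ^ 2 := by
  rw [eLpNorm_eq_lintegral_rpow_enorm_toReal (by norm_num) (by norm_num)]
  have h2 : ∀ x : ℝ≥0∞, x ^ ((2 : ℝ≥0∞).toReal) = x ^ (2 : ℕ) := fun x => by
    rw [show ((2 : ℝ≥0∞).toReal) = ((2 : ℕ) : ℝ) by norm_num, ENNReal.rpow_natCast]
  simp only [h2, enorm_eq_nnnorm]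
  rw [show (1 / (2 : ℝ≥0∞).toReal) = (2 : ℝ)⁻¹ by norm_num, sq_sqrt]

variable {G : Type} [Group G] [TopologicalSpace G] [IsTopologicalGroup G]
    [LocallyCompactSpace G] [SecondCountableTopology G]
    [MeasurableSpace G] [BorelSpace G]
    (mG : Measure G) [mG.IsHaarMeasure]

lemma aux_shift (t : G) : ∃ Δ : ℝ≥0∞, Δ ≠ 0 ∧ Δ ≠ ∞ ∧ ∀ f : G → ℝ≥0∞, Measurable f →
    ∫⁻ y, f (y * t) ∂mG = Δ * ∫⁻ x, f x ∂mG := by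
  refine ⟨Measure.haarScalarFactor (mG.map (· * t)) mG, ?_, ENNReal.coe_ne_top, fun f hf => ?_⟩
  · exact_mod_cast (Measure.haarScalarFactor_pos_of_isHaarMeasure _ _).ne'
  · rw [← lintegral_map hf (measurable_mul_const t)]
    conv_lhs => rw [Measure.isMulLeftInvariant_eq_smul (mG.map (· * t)) mG]
    rw [lintegral_smul_measure, ENNReal.smul_def, smul_eq_mul]

lemma aux_claimB (Γ : Subgroup G) (B₀ : Set G) (hB₀meas : MeasurableSet B₀)
    (hB₀fin : mG B₀ ≠ ∞) (hB₀pos : mG B₀ ≠ 0)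
    (F₀ : Finset Γ) (κ : ℝ≥0)
    (hgap : ∀ φ : G → ℂ, MemLp φ 2 mG → (∫ x in B₀, φ x ∂mG) = 0 →
      eLpNorm φ 2 (mG.restrict B₀) ≤ (κ : ℝ≥0∞) *
        F₀.sup fun γ => eLpNorm (fun x => φ ((γ : G)⁻¹ * x) - φ x) 2 (mG.restrict B₀))
    (ψ : G → ℂ) (hψ : MemLp ψ 2 mG) :
    ∫⁻ y in B₀, (‖ψ y - (mG B₀).toReal⁻¹ • (∫ x in B₀, ψ x ∂mG)‖₊ : ℝ≥0∞) ^ 2 ∂mG ≤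
      (κ : ℝ≥0∞) ^ 2 * ∑ γ ∈ F₀, ∫⁻ y in B₀, (‖ψ ((γ:G)⁻¹ * y) - ψ y‖₊ : ℝ≥0∞) ^ 2 ∂mG := by
  set c : ℂ := (mG B₀).toReal⁻¹ • (∫ x in B₀, ψ x ∂mG) with hc
  set B : Set G := B₀ ∪ ⋃ γ ∈ F₀, (fun x => (γ : G) * x) ⁻¹' B₀ with hB
  have hBmeas : MeasurableSet B := hB₀meas.union (MeasurableSet.biUnion
    (F₀ : Set Γ).to_countable (fun γ _ => (measurable_const_mul _) hB₀meas))
  have hBfin : mG B ≠ ∞ := by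
    refine ne_of_lt (lt_of_le_of_lt (measure_union_le _ _) ?_)
    have h2 : mG (⋃ γ ∈ F₀, (fun x => (γ : G) * x) ⁻¹' B₀)
        ≤ ∑ γ ∈ F₀, mG ((fun x => (γ : G) * x) ⁻¹' B₀) := measure_biUnion_finset_le _ _
    have h3 : ∀ γ : Γ, mG ((fun x => (γ : G) * x) ⁻¹' B₀) = mG B₀ := fun γ =>
      measure_preimage_mul mG _ _
    refine ENNReal.add_lt_top.2 ⟨hB₀fin.lt_top, lt_of_le_of_lt h2 ?_⟩
    simp only [h3]
    exact ENNReal.sum_lt_top.2 (fun _ _ => hB₀fin.lt_top)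
  have hB₀B : B₀ ⊆ B := Set.subset_union_left
  set χ : G → ℂ := B.indicator (fun x => ψ x - c) with hχ
  have hχeq : χ = fun x => B.indicator ψ x - B.indicator (fun _ => c) x := by
    funext x; by_cases hx : x ∈ B <;> simp [hχ, hx]
  have hχmem : MemLp χ 2 mG := by
    rw [hχeq]
    exact (hψ.indicator hBmeas).sub (memLp_indicator_const 2 hBmeas c (Or.inr hBfin))
  have hfinB₀ : IsFiniteMeasure (mG.restrict B₀) :=
    ⟨by rw [Measure.restrict_apply_univ]; exact hB₀fin.lt_top⟩
  have hψint : IntegrableOn ψ B₀ mG := (hψ.restrict B₀).integrable (by norm_num)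
  have htR : (mG B₀).toReal ≠ 0 := by
    simp [ENNReal.toReal_eq_zero_iff, hB₀pos, hB₀fin]
  have hint : (∫ x in B₀, χ x ∂mG) = 0 := by
    have h1 : (∫ x in B₀, χ x ∂mG) = ∫ x in B₀, (ψ x - c) ∂mG :=
      setIntegral_congr_fun hB₀meas (fun x hx => by
        simp [hχ, Set.indicator_of_mem (hB₀B hx)])
    rw [h1, integral_sub hψint (integrableOn_const hB₀fin),
      setIntegral_const, measureReal_def, hc, smul_smul, mul_inv_cancel₀ htR, one_smul, sub_self]
  have key := hgap χ hχmem hint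
  have hLHS : eLpNorm χ 2 (mG.restrict B₀) = eLpNorm (fun y => ψ y - c) 2 (mG.restrict B₀) := by
    refine eLpNorm_congr_ae ?_
    filter_upwards [self_mem_ae_restrict hB₀meas] with x hx
    simp [hχ, Set.indicator_of_mem (hB₀B hx)]
  have hRHS : ∀ γ : Γ, γ ∈ F₀ → eLpNorm (fun x => χ ((γ : G)⁻¹ * x) - χ x) 2 (mG.restrict B₀)
      = eLpNorm (fun x => ψ ((γ : G)⁻¹ * x) - ψ x) 2 (mG.restrict B₀) := by
    intro γ hγ
    refine eLpNorm_congr_ae ?_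
    filter_upwards [self_mem_ae_restrict hB₀meas] with x hx
    have h1 : x ∈ B := hB₀B hx
    have h2 : (γ : G)⁻¹ * x ∈ B := by
      refine Set.mem_union_right _ (Set.mem_biUnion hγ ?_)
      simp only [Set.mem_preimage, mul_inv_cancel_left]
      exact hx
    simp only [hχ, Set.indicator_of_mem h1, Set.indicator_of_mem h2]
    ring
  rw [hLHS] at key
  have key2 : eLpNorm (fun y => ψ y - c) 2 (mG.restrict B₀) ^ 2 ≤
      ((κ : ℝ≥0∞) * F₀.sup fun γ =>
        eLpNorm (fun x => χ ((γ : G)⁻¹ * x) - χ x) 2 (mG.restrict B₀)) ^ 2 :=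
    pow_le_pow_left' key 2
  rw [mul_pow, sup_sq] at key2
  rw [lint_eq]
  refine le_trans key2 ?_
  refine mul_le_mul_right ?_ _
  refine Finset.sup_le fun γ hγ => ?_
  rw [hRHS γ hγ, ← lint_eq]
  exact Finset.single_le_sum (f := fun γ : Γ =>
    ∫⁻ y in B₀, (‖ψ ((γ : G)⁻¹ * y) - ψ y‖₊ : ℝ≥0∞) ^ 2 ∂mG) (fun _ _ => zero_le) hγ

lemma aux_core (Γ : Subgroup G) (B₀ : Set G) (hB₀meas : MeasurableSet B₀)
    (hB₀fin : mG B₀ ≠ ∞) (hB₀pos : mG B₀ ≠ 0) (hB₀int : (interior B₀).Nonempty)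
    (F₀ : Finset Γ) (κ : ℝ≥0)
    (hgap : ∀ φ : G → ℂ, MemLp φ 2 mG → (∫ x in B₀, φ x ∂mG) = 0 →
      eLpNorm φ 2 (mG.restrict B₀) ≤ (κ : ℝ≥0∞) *
        F₀.sup fun γ => eLpNorm (fun x => φ ((γ : G)⁻¹ * x) - φ x) 2 (mG.restrict B₀)) :
    ∃ U : Set G, IsOpen U ∧ (1 : G) ∈ U ∧ ∃ C : ℝ≥0∞, C ≠ ∞ ∧
      ∀ φ : G → ℂ, StronglyMeasurable φ → MemLp φ 2 mG → ∀ u, u ∈ U →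
        ∫⁻ x, (‖φ (u⁻¹ * x) - φ x‖₊ : ℝ≥0∞) ^ 2 ∂mG ≤
          C * ∑ γ ∈ F₀, ∫⁻ x, (‖φ ((γ : G)⁻¹ * x) - φ x‖₊ : ℝ≥0∞) ^ 2 ∂mG := by
  obtain ⟨x₀, hx₀⟩ := hB₀int
  have hnb : (fun y => x₀ * y) ⁻¹' interior B₀ ∈ 𝓝 (1 : G) := by
    refine IsOpen.mem_nhds (isOpen_interior.preimage (continuous_mul_left x₀)) ?_
    simpa using hx₀
  obtain ⟨W₁, hW₁open, hW₁1, hW₁sub⟩ := exists_open_nhds_one_mul_subset hnb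
  obtain ⟨Kc, hKc_comp, hKc_mem⟩ := exists_compact_mem_nhds (1 : G)
  set W : Set G := W₁ ∩ interior Kc with hWdef
  have hWopen : IsOpen W := hW₁open.inter isOpen_interior
  have hW1 : (1 : G) ∈ W := ⟨hW₁1, mem_interior_iff_mem_nhds.2 hKc_mem⟩
  have hWpos : mG W ≠ 0 := (hWopen.measure_pos mG ⟨1, hW1⟩).ne'
  have hWfin : mG W ≠ ∞ :=
    (lt_of_le_of_lt (measure_mono (Set.inter_subset_right.trans interior_subset))
      hKc_comp.measure_lt_top).ne
  set U : Set G := (fun g => x₀⁻¹ * (g * x₀)) ⁻¹' W with hUdef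
  have hUopen : IsOpen U := hWopen.preimage (by fun_prop)
  have hU1 : (1 : G) ∈ U := by
    simp only [hUdef, Set.mem_preimage, one_mul, inv_mul_cancel]
    exact hW1
  have hgeo1 : ∀ w ∈ W, x₀ * w ∈ B₀ := by
    intro w hw
    have h := hW₁sub (Set.mul_mem_mul hW₁1 hw.1)
    simp only [Set.mem_preimage, one_mul] at h
    exact interior_subset h
  have hgeo2 : ∀ u ∈ U, ∀ w ∈ W, u * (x₀ * w) ∈ B₀ := by
    intro u hu w hw
    have h1 : (x₀⁻¹ * (u * x₀)) ∈ W₁ := hu.1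
    have h := hW₁sub (Set.mul_mem_mul h1 hw.1)
    simp only [Set.mem_preimage] at h
    have he : x₀ * (x₀⁻¹ * (u * x₀) * w) = u * (x₀ * w) := by group
    rw [he] at h
    exact interior_subset h
  refine ⟨U, hUopen, hU1, (mG W)⁻¹ * (8 * (κ : ℝ≥0∞) ^ 2 * mG B₀), ?_, ?_⟩
  · refine ENNReal.mul_ne_top (ENNReal.inv_ne_top.2 hWpos) ?_
    exact ENNReal.mul_ne_top (ENNReal.mul_ne_top (by norm_num)
      (ENNReal.pow_ne_top ENNReal.coe_ne_top)) hB₀fin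
  intro φ hφm hφ u hu
  have hφmeas : Measurable φ := hφm.measurable
  set ind : G → ℝ≥0∞ := Set.indicator B₀ (fun _ => 1) with hind
  have hindmeas : Measurable ind := measurable_const.indicator hB₀meas
  have hindle : ∀ z, ind z ≤ 1 := by
    intro z; by_cases hz : z ∈ B₀ <;> simp [hind, hz]
  have hindconv : ∀ h : G → ℝ≥0∞, (∫⁻ y, ind y * h y ∂mG) = ∫⁻ y in B₀, h y ∂mG := by
    intro h
    rw [← lintegral_indicator hB₀meas]
    congr 1; funext y; by_cases hy : y ∈ B₀ <;> simp [hind, hy]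
  -- the field of local means
  set c : G → ℂ := fun s => (mG B₀).toReal⁻¹ • (∫ y in B₀, φ (y * s⁻¹) ∂mG) with hcdef
  have hcm : StronglyMeasurable c := by
    have h1 : StronglyMeasurable fun p : G × G => φ (p.2 * p.1⁻¹) :=
      hφm.comp_measurable (measurable_snd.mul measurable_fst.inv)
    have hprod : StronglyMeasurable
        (fun p : G × G => Set.indicator B₀ (fun y => φ (y * p.1⁻¹)) p.2) := by
      have heq : (fun p : G × G => Set.indicator B₀ (fun y => φ (y * p.1⁻¹)) p.2) =
          Set.indicator ((Set.univ : Set G) ×ˢ B₀) (fun p : G × G => φ (p.2 * p.1⁻¹)) := by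
        funext p
        by_cases hp : p.2 ∈ B₀ <;>
          simp [Set.indicator, hp]
      rw [heq]
      exact h1.indicator (MeasurableSet.univ.prod hB₀meas)
    have h2 : StronglyMeasurable fun s => ∫ y, Set.indicator B₀ (fun y => φ (y * s⁻¹)) y ∂mG :=
      hprod.integral_prod_right'
    have h3 : c = fun s =>
        (mG B₀).toReal⁻¹ • ∫ y, Set.indicator B₀ (fun y => φ (y * s⁻¹)) y ∂mG := by
      funext s
      rw [hcdef]
      congr 1
      rw [integral_indicator hB₀meas]
    rw [h3]
    exact h2.const_smul ((mG B₀).toReal⁻¹ : ℝ)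
  have hcmeas : Measurable c := hcm.measurable
  -- measurability of the building blocks
  have hQmeas : ∀ g : G, Measurable fun x => (‖φ (g⁻¹ * x) - φ x‖₊ : ℝ≥0∞) ^ 2 := by
    intro g
    exact (((hφmeas.comp (measurable_const_mul g⁻¹)).sub
      hφmeas).nnnorm.coe_nnreal_ennreal).pow_const 2
  -- Step 1 : lower bound on the double indicator integral
  have step1 : ∀ x : G, mG W ≤ ∫⁻ s, ind (x * s) * ind ((u⁻¹ * x) * s) ∂mG := by
    intro x
    set a : G := x⁻¹ * (u * x₀) with ha
    set S : Set G := (fun s => a⁻¹ * s) ⁻¹' W with hS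
    have hSmeas : MeasurableSet S := (measurable_const_mul a⁻¹) hWopen.measurableSet
    have hSval : mG S = mG W := measure_preimage_mul mG a⁻¹ W
    have hpt : ∀ s : G, S.indicator (fun _ => (1 : ℝ≥0∞)) s ≤ ind (x * s) * ind ((u⁻¹ * x) * s) := by
      intro s
      by_cases hs : s ∈ S
      · have hw : a⁻¹ * s ∈ W := hs
        have he1 : x * s = u * (x₀ * (a⁻¹ * s)) := by rw [ha]; group
        have he2 : (u⁻¹ * x) * s = x₀ * (a⁻¹ * s) := by rw [ha]; group
        rw [Set.indicator_of_mem hs, he1, he2, hind,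
          Set.indicator_of_mem (hgeo2 u hu _ hw), Set.indicator_of_mem (hgeo1 _ hw), mul_one]
      · rw [Set.indicator_of_notMem hs]
        exact zero_le
    calc mG W = mG S := hSval.symm
      _ = ∫⁻ s, S.indicator (fun _ => (1 : ℝ≥0∞)) s ∂mG := (lintegral_indicator_one hSmeas).symm
      _ ≤ _ := lintegral_mono hpt
  -- Step 2 : pointwise bound
  have step2 : ∀ x s : G,
      (ind (x * s) * ind ((u⁻¹ * x) * s)) * (‖φ (u⁻¹ * x) - φ x‖₊ : ℝ≥0∞) ^ 2 ≤
        4 * (ind ((u⁻¹ * x) * s) * (‖φ (u⁻¹ * x) - c s‖₊ : ℝ≥0∞) ^ 2) +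
        4 * (ind (x * s) * (‖φ x - c s‖₊ : ℝ≥0∞) ^ 2) := by
    intro x s
    have hkey := sq_diff_le (φ (u⁻¹ * x)) (φ x) (c s)
    calc (ind (x * s) * ind ((u⁻¹ * x) * s)) * (‖φ (u⁻¹ * x) - φ x‖₊ : ℝ≥0∞) ^ 2
        ≤ (ind (x * s) * ind ((u⁻¹ * x) * s)) *
          (4 * (‖φ (u⁻¹ * x) - c s‖₊ : ℝ≥0∞) ^ 2 + 4 * (‖c s - φ x‖₊ : ℝ≥0∞) ^ 2) :=
        mul_le_mul_right hkey _
      _ = 4 * (ind (x * s) * (ind ((u⁻¹ * x) * s) * (‖φ (u⁻¹ * x) - c s‖₊ : ℝ≥0∞) ^ 2)) +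
          4 * (ind ((u⁻¹ * x) * s) * (ind (x * s) * (‖c s - φ x‖₊ : ℝ≥0∞) ^ 2)) := by ring
      _ ≤ 4 * (1 * (ind ((u⁻¹ * x) * s) * (‖φ (u⁻¹ * x) - c s‖₊ : ℝ≥0∞) ^ 2)) +
          4 * (1 * (ind (x * s) * (‖c s - φ x‖₊ : ℝ≥0∞) ^ 2)) := by
        gcongr <;> exact hindle _
      _ = 4 * (ind ((u⁻¹ * x) * s) * (‖φ (u⁻¹ * x) - c s‖₊ : ℝ≥0∞) ^ 2) +
          4 * (ind (x * s) * (‖φ x - c s‖₊ : ℝ≥0∞) ^ 2) := by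
        have hrev : (‖c s - φ x‖₊ : ℝ≥0∞) = (‖φ x - c s‖₊ : ℝ≥0∞) := by
          rw [← neg_sub (φ x) (c s), nnnorm_neg]
        rw [hrev]; ring
  -- per-s spectral gap estimate
  have stepB : ∀ s : G, (∫⁻ x, ind (x * s) * (‖φ x - c s‖₊ : ℝ≥0∞) ^ 2 ∂mG)
      ≤ (κ : ℝ≥0∞) ^ 2 *
        ∑ γ ∈ F₀, ∫⁻ x, ind (x * s) * (‖φ ((γ : G)⁻¹ * x) - φ x‖₊ : ℝ≥0∞) ^ 2 ∂mG := by
    intro s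
    obtain ⟨Δ, hΔ0, hΔtop, hΔ⟩ := aux_shift mG s⁻¹
    set ψ : G → ℂ := fun y => φ (y * s⁻¹) with hψdef
    have hψm : StronglyMeasurable ψ := hφm.comp_measurable (measurable_mul_const s⁻¹)
    have hnormψ : (∫⁻ y, (‖ψ y‖₊ : ℝ≥0∞) ^ 2 ∂mG) = Δ * ∫⁻ x, (‖φ x‖₊ : ℝ≥0∞) ^ 2 ∂mG :=
      hΔ (fun x => (‖φ x‖₊ : ℝ≥0∞) ^ 2) ((hφmeas.nnnorm.coe_nnreal_ennreal).pow_const 2)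
    have hψmem : MemLp ψ 2 mG := by
      refine ⟨hψm.aestronglyMeasurable, ?_⟩
      have h2 : eLpNorm ψ 2 mG ^ 2 < ∞ := by
        rw [← lint_eq, hnormψ, lint_eq]
        exact ENNReal.mul_lt_top hΔtop.lt_top (ENNReal.pow_lt_top hφ.2)
      rcases eq_top_or_lt_top (eLpNorm ψ 2 mG) with h | h
      · rw [h, ENNReal.top_pow (by norm_num)] at h2; exact absurd h2 (lt_irrefl _)
      · exact h
    have hclaim := aux_claimB mG Γ B₀ hB₀meas hB₀fin hB₀pos F₀ κ hgap ψ hψmem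
    have hJ : Δ * (∫⁻ x, ind (x * s) * (‖φ x - c s‖₊ : ℝ≥0∞) ^ 2 ∂mG)
        = ∫⁻ y in B₀, (‖ψ y - c s‖₊ : ℝ≥0∞) ^ 2 ∂mG := by
      rw [← hΔ (fun x => ind (x * s) * (‖φ x - c s‖₊ : ℝ≥0∞) ^ 2)
        ((hindmeas.comp (measurable_mul_const s)).mul
          (((hφmeas.sub measurable_const).nnnorm.coe_nnreal_ennreal).pow_const 2)),
        ← hindconv fun y => (‖ψ y - c s‖₊ : ℝ≥0∞) ^ 2]
      congr 1; funext y
      rw [inv_mul_cancel_right]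
    have hJγ : ∀ γ : Γ,
        Δ * (∫⁻ x, ind (x * s) * (‖φ ((γ : G)⁻¹ * x) - φ x‖₊ : ℝ≥0∞) ^ 2 ∂mG)
          = ∫⁻ y in B₀, (‖ψ ((γ : G)⁻¹ * y) - ψ y‖₊ : ℝ≥0∞) ^ 2 ∂mG := by
      intro γ
      rw [← hΔ (fun x => ind (x * s) * (‖φ ((γ : G)⁻¹ * x) - φ x‖₊ : ℝ≥0∞) ^ 2)
          ((hindmeas.comp (measurable_mul_const s)).mul (hQmeas ((γ : G)))),
        ← hindconv fun y => (‖ψ ((γ : G)⁻¹ * y) - ψ y‖₊ : ℝ≥0∞) ^ 2]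
      congr 1; funext y
      rw [inv_mul_cancel_right, hψdef]
      simp only [mul_assoc]
    refine (ENNReal.mul_le_mul_iff_right hΔ0 hΔtop).1 ?_
    rw [hJ]
    refine hclaim.trans (le_of_eq ?_)
    calc (κ : ℝ≥0∞) ^ 2 * ∑ γ ∈ F₀, ∫⁻ y in B₀, (‖ψ ((γ : G)⁻¹ * y) - ψ y‖₊ : ℝ≥0∞) ^ 2 ∂mG
        = (κ : ℝ≥0∞) ^ 2 * ∑ γ ∈ F₀,
            Δ * ∫⁻ x, ind (x * s) * (‖φ ((γ : G)⁻¹ * x) - φ x‖₊ : ℝ≥0∞) ^ 2 ∂mG := by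
          congr 1
          exact Finset.sum_congr rfl fun γ _ => (hJγ γ).symm
      _ = Δ * ((κ : ℝ≥0∞) ^ 2 * ∑ γ ∈ F₀,
            ∫⁻ x, ind (x * s) * (‖φ ((γ : G)⁻¹ * x) - φ x‖₊ : ℝ≥0∞) ^ 2 ∂mG) := by
          rw [← Finset.mul_sum]; ring
  -- collapsing the double integral on the good side
  have hstep4 : ∀ s : G, (∫⁻ x, (4 * (ind ((u⁻¹ * x) * s) * (‖φ (u⁻¹ * x) - c s‖₊ : ℝ≥0∞) ^ 2) +
        4 * (ind (x * s) * (‖φ x - c s‖₊ : ℝ≥0∞) ^ 2)) ∂mG)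
      = 8 * ∫⁻ x, ind (x * s) * (‖φ x - c s‖₊ : ℝ≥0∞) ^ 2 ∂mG := by
    intro s
    have hmg : Measurable fun x => ind (x * s) * (‖φ x - c s‖₊ : ℝ≥0∞) ^ 2 :=
      (hindmeas.comp (measurable_mul_const s)).mul
        (((hφmeas.sub measurable_const).nnnorm.coe_nnreal_ennreal).pow_const 2)
    have hmf : Measurable fun x => ind ((u⁻¹ * x) * s) * (‖φ (u⁻¹ * x) - c s‖₊ : ℝ≥0∞) ^ 2 :=
      hmg.comp (measurable_const_mul u⁻¹)
    rw [lintegral_add_left (hmf.const_mul 4), lintegral_const_mul 4 hmf,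
      lintegral_const_mul 4 hmg]
    have hJ'' : (∫⁻ x, ind ((u⁻¹ * x) * s) * (‖φ (u⁻¹ * x) - c s‖₊ : ℝ≥0∞) ^ 2 ∂mG)
        = ∫⁻ x, ind (x * s) * (‖φ x - c s‖₊ : ℝ≥0∞) ^ 2 ∂mG :=
      (measurePreserving_mul_left mG u⁻¹).lintegral_comp hmg
    rw [hJ'']
    ring
  -- the value of the s-integral of the indicator
  have step6 : ∀ γ : G,
      (∫⁻ s, ∫⁻ x, ind (x * s) * (‖φ (γ⁻¹ * x) - φ x‖₊ : ℝ≥0∞) ^ 2 ∂mG ∂mG)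
        = mG B₀ * ∫⁻ x, (‖φ (γ⁻¹ * x) - φ x‖₊ : ℝ≥0∞) ^ 2 ∂mG := by
    intro γ
    have hum : Measurable (Function.uncurry fun s x : G =>
        ind (x * s) * (‖φ (γ⁻¹ * x) - φ x‖₊ : ℝ≥0∞) ^ 2) :=
      (hindmeas.comp (measurable_snd.mul measurable_fst)).mul
        ((hQmeas γ).comp measurable_snd)
    rw [lintegral_lintegral_swap hum.aemeasurable]
    have h1 : ∀ x : G, (∫⁻ s, ind (x * s) * (‖φ (γ⁻¹ * x) - φ x‖₊ : ℝ≥0∞) ^ 2 ∂mG)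
        = mG B₀ * (‖φ (γ⁻¹ * x) - φ x‖₊ : ℝ≥0∞) ^ 2 := by
      intro x
      rw [lintegral_mul_const (f := fun s => ind (x * s)) _
        (hindmeas.comp (measurable_const_mul x))]
      have hval : (∫⁻ s, ind (x * s) ∂mG) = mG B₀ := by
        have heq : (fun s => ind (x * s)) =
            Set.indicator ((fun s => x * s) ⁻¹' B₀) (fun _ => (1 : ℝ≥0∞)) := by
          funext s; by_cases hs : x * s ∈ B₀ <;> simp [hind, Set.indicator, hs]
        rw [heq, lintegral_indicator ((measurable_const_mul x) hB₀meas), setLIntegral_one]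
        exact measure_preimage_mul mG x B₀
      rw [hval, mul_comm]
    simp_rw [h1]
    rw [lintegral_const_mul _ (hQmeas γ)]
  -- measurability for the swap and for the s-integrals
  have hAmeas : Measurable (Function.uncurry fun x s : G =>
      4 * (ind ((u⁻¹ * x) * s) * (‖φ (u⁻¹ * x) - c s‖₊ : ℝ≥0∞) ^ 2) +
      4 * (ind (x * s) * (‖φ x - c s‖₊ : ℝ≥0∞) ^ 2)) := by
    apply Measurable.add
    · apply Measurable.const_mul
      exact (hindmeas.comp ((measurable_const.mul measurable_fst).mul measurable_snd)).mul
        ((((hφmeas.comp (measurable_const.mul measurable_fst)).sub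
          (hcmeas.comp measurable_snd)).nnnorm.coe_nnreal_ennreal).pow_const 2)
    · apply Measurable.const_mul
      exact (hindmeas.comp (measurable_fst.mul measurable_snd)).mul
        ((((hφmeas.comp measurable_fst).sub
          (hcmeas.comp measurable_snd)).nnnorm.coe_nnreal_ennreal).pow_const 2)
  have hsmeas : ∀ γ : Γ, Measurable fun s =>
      ∫⁻ x, ind (x * s) * (‖φ ((γ : G)⁻¹ * x) - φ x‖₊ : ℝ≥0∞) ^ 2 ∂mG := by
    intro γ
    exact Measurable.lintegral_prod_right
      ((hindmeas.comp (measurable_snd.mul measurable_fst)).mul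
        ((hQmeas ((γ : G))).comp measurable_snd))
  -- main chain
  have main : mG W * (∫⁻ x, (‖φ (u⁻¹ * x) - φ x‖₊ : ℝ≥0∞) ^ 2 ∂mG) ≤
      (8 * (κ : ℝ≥0∞) ^ 2 * mG B₀) *
        ∑ γ ∈ F₀, ∫⁻ x, (‖φ ((γ : G)⁻¹ * x) - φ x‖₊ : ℝ≥0∞) ^ 2 ∂mG := by
    calc mG W * (∫⁻ x, (‖φ (u⁻¹ * x) - φ x‖₊ : ℝ≥0∞) ^ 2 ∂mG)
        = ∫⁻ x, mG W * (‖φ (u⁻¹ * x) - φ x‖₊ : ℝ≥0∞) ^ 2 ∂mG :=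
          (lintegral_const_mul _ (hQmeas u)).symm
      _ ≤ ∫⁻ x, (∫⁻ s, ind (x * s) * ind ((u⁻¹ * x) * s) ∂mG) *
            (‖φ (u⁻¹ * x) - φ x‖₊ : ℝ≥0∞) ^ 2 ∂mG :=
          lintegral_mono fun x => mul_le_mul_left (step1 x) _
      _ = ∫⁻ x, ∫⁻ s, (ind (x * s) * ind ((u⁻¹ * x) * s)) *
            (‖φ (u⁻¹ * x) - φ x‖₊ : ℝ≥0∞) ^ 2 ∂mG ∂mG := by
          congr 1; funext x
          rw [lintegral_mul_const (f := fun s => ind (x * s) * ind ((u⁻¹ * x) * s)) _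
            ((hindmeas.comp (measurable_const_mul x)).mul
              (hindmeas.comp (measurable_const_mul (u⁻¹ * x))))]
      _ ≤ ∫⁻ x, ∫⁻ s, (4 * (ind ((u⁻¹ * x) * s) * (‖φ (u⁻¹ * x) - c s‖₊ : ℝ≥0∞) ^ 2) +
            4 * (ind (x * s) * (‖φ x - c s‖₊ : ℝ≥0∞) ^ 2)) ∂mG ∂mG :=
          lintegral_mono fun x => lintegral_mono fun s => step2 x s
      _ = ∫⁻ s, ∫⁻ x, (4 * (ind ((u⁻¹ * x) * s) * (‖φ (u⁻¹ * x) - c s‖₊ : ℝ≥0∞) ^ 2) +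
            4 * (ind (x * s) * (‖φ x - c s‖₊ : ℝ≥0∞) ^ 2)) ∂mG ∂mG :=
          lintegral_lintegral_swap hAmeas.aemeasurable
      _ = ∫⁻ s, 8 * ∫⁻ x, ind (x * s) * (‖φ x - c s‖₊ : ℝ≥0∞) ^ 2 ∂mG ∂mG := by
          congr 1; funext s; exact hstep4 s
      _ ≤ ∫⁻ s, 8 * ((κ : ℝ≥0∞) ^ 2 * ∑ γ ∈ F₀,
            ∫⁻ x, ind (x * s) * (‖φ ((γ : G)⁻¹ * x) - φ x‖₊ : ℝ≥0∞) ^ 2 ∂mG) ∂mG :=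
          lintegral_mono fun s => mul_le_mul_right (stepB s) 8
      _ = 8 * ((κ : ℝ≥0∞) ^ 2 * ∫⁻ s, (∑ γ ∈ F₀,
            ∫⁻ x, ind (x * s) * (‖φ ((γ : G)⁻¹ * x) - φ x‖₊ : ℝ≥0∞) ^ 2 ∂mG) ∂mG) := by
          rw [lintegral_const_mul 8 ((Finset.measurable_sum F₀ fun γ _ =>
            hsmeas γ).const_mul _)]
          rw [lintegral_const_mul _ (Finset.measurable_sum F₀ fun γ _ => hsmeas γ)]
      _ = 8 * ((κ : ℝ≥0∞) ^ 2 * ∑ γ ∈ F₀, ∫⁻ s,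
            (∫⁻ x, ind (x * s) * (‖φ ((γ : G)⁻¹ * x) - φ x‖₊ : ℝ≥0∞) ^ 2 ∂mG) ∂mG) := by
          rw [lintegral_finset_sum _ fun γ _ => hsmeas γ]
      _ = 8 * ((κ : ℝ≥0∞) ^ 2 * ∑ γ ∈ F₀, mG B₀ *
            ∫⁻ x, (‖φ ((γ : G)⁻¹ * x) - φ x‖₊ : ℝ≥0∞) ^ 2 ∂mG) := by
          congr 2
          exact Finset.sum_congr rfl fun γ _ => step6 ((γ : G))
      _ = (8 * (κ : ℝ≥0∞) ^ 2 * mG B₀) *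
            ∑ γ ∈ F₀, ∫⁻ x, (‖φ ((γ : G)⁻¹ * x) - φ x‖₊ : ℝ≥0∞) ^ 2 ∂mG := by
          rw [← Finset.mul_sum]; ring
  calc ∫⁻ x, (‖φ (u⁻¹ * x) - φ x‖₊ : ℝ≥0∞) ^ 2 ∂mG
      = (mG W)⁻¹ * (mG W * ∫⁻ x, (‖φ (u⁻¹ * x) - φ x‖₊ : ℝ≥0∞) ^ 2 ∂mG) := by
        rw [← mul_assoc, ENNReal.inv_mul_cancel hWpos hWfin, one_mul]
    _ ≤ (mG W)⁻¹ * ((8 * (κ : ℝ≥0∞) ^ 2 * mG B₀) *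
          ∑ γ ∈ F₀, ∫⁻ x, (‖φ ((γ : G)⁻¹ * x) - φ x‖₊ : ℝ≥0∞) ^ 2 ∂mG) :=
        mul_le_mul_right main _
    _ = _ := (mul_assoc _ _ _).symm


end LocalGapAux

/-- **Lemma (converse: from local spectral gap to uniform almost invariance).**
Let `Γ` be a countable dense subgroup of a locally compact second countable group `G` with left
Haar measure `mG`, and assume the left translation action `Γ ↷ (G, mG)` has local spectral gap
with respect to some compact set `B₀ ⊆ G` with non-empty interior.  Then for every compact
`K ⊆ G` there exist a finite set `F ⊆ Γ` and `κ > 0` such that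
`sup_{g ∈ K} ‖λ(g)φ - φ‖₂ ≤ κ · max_{g ∈ F} ‖λ(g)φ - φ‖₂` for every `φ ∈ L²(G)`, where
`λ` is the left regular representation `(λ(g)φ)(x) = φ(g⁻¹x)`. -/
theorem uniform_almost_invariance_of_local_spectral_gap
    (G : Type) [Group G] [TopologicalSpace G] [IsTopologicalGroup G]
    [LocallyCompactSpace G] [SecondCountableTopology G]
    [MeasurableSpace G] [BorelSpace G]
    (mG : Measure G) [mG.IsHaarMeasure]
    (Γ : Subgroup G) [Countable Γ] (hdense : Dense (Γ : Set G))
    (B₀ : Set G) (hB₀meas : MeasurableSet B₀) (hB₀comp : IsCompact B₀)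
    (hB₀int : (interior B₀).Nonempty)
    (hlsg : HasLocalSpectralGap Γ mG B₀)
    (K : Set G) (hK : IsCompact K) :
    ∃ (F : Finset Γ) (κ : ℝ≥0), 0 < κ ∧
      ∀ φ : G → ℂ, MemLp φ 2 mG → ∀ g ∈ K,
        eLpNorm (fun x => φ (g⁻¹ * x) - φ x) 2 mG ≤ (κ : ℝ≥0∞) *
          F.sup fun γ => eLpNorm (fun x => φ ((γ : G)⁻¹ * x) - φ x) 2 mG := by
  classical
  obtain ⟨F₀, κ, hκ, hgap⟩ := hlsg
  have hB₀fin : mG B₀ ≠ ∞ := hB₀comp.measure_lt_top.ne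
  have hB₀pos : mG B₀ ≠ 0 := by
    have h0 : 0 < mG (interior B₀) := isOpen_interior.measure_pos mG hB₀int
    exact (lt_of_lt_of_le h0 (measure_mono interior_subset)).ne'
  obtain ⟨U, hUopen, hU1, C, hCfin, hcore⟩ :=
    LocalGapAux.aux_core mG Γ B₀ hB₀meas hB₀fin hB₀pos hB₀int F₀ κ hgap
  have hcover : K ⊆ ⋃ γ : Γ, (γ : G) • U := by
    intro g hg
    have hO : IsOpen ((fun h : G => h⁻¹ * g) ⁻¹' U) := hUopen.preimage (by fun_prop)
    have hgO : g ∈ (fun h : G => h⁻¹ * g) ⁻¹' U := by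
      simp only [Set.mem_preimage, inv_mul_cancel]
      exact hU1
    obtain ⟨γ₀, hγ₀Γ, hγ₀O⟩ := hdense.exists_mem_open hO ⟨g, hgO⟩
    refine Set.mem_iUnion.2 ⟨⟨γ₀, hγ₀Γ⟩, ?_⟩
    exact ⟨γ₀⁻¹ * g, hγ₀O, by simp⟩
  obtain ⟨Γ₁, hΓ₁⟩ := hK.elim_finite_subcover (fun γ : Γ => (γ : G) • U)
    (fun γ => hUopen.smul _) hcover
  set F : Finset Γ := F₀ ∪ Γ₁ with hF
  set D : ℝ≥0∞ := (C * (F₀.card : ℝ≥0∞)) ^ ((2 : ℝ)⁻¹) + 1 with hD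
  have hDfin : D ≠ ∞ := by
    rw [hD]
    refine ENNReal.add_ne_top.2 ⟨?_, by norm_num⟩
    exact (ENNReal.rpow_lt_top_of_nonneg (by norm_num)
      (ENNReal.mul_ne_top hCfin (ENNReal.natCast_ne_top _))).ne
  refine ⟨F, D.toNNReal + 1, lt_of_lt_of_le zero_lt_one le_add_self, ?_⟩
  intro φ hφ g hg
  obtain ⟨φ', hφ'm, hφae⟩ : ∃ φ' : G → ℂ, StronglyMeasurable φ' ∧ φ =ᵐ[mG] φ' :=
    ⟨hφ.1.mk φ, hφ.1.stronglyMeasurable_mk, hφ.1.ae_eq_mk⟩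
  have hφ' : MemLp φ' 2 mG := hφ.ae_eq hφae
  have hdiff : ∀ h : G, (fun x => φ (h⁻¹ * x) - φ x) =ᵐ[mG] fun x => φ' (h⁻¹ * x) - φ' x := by
    intro h
    have h1 : (fun x => φ (h⁻¹ * x)) =ᵐ[mG] fun x => φ' (h⁻¹ * x) :=
      (measurePreserving_mul_left mG h⁻¹).quasiMeasurePreserving.ae_eq_comp hφae
    exact h1.sub hφae
  have hsup : (F.sup fun γ => eLpNorm (fun x => φ ((γ : G)⁻¹ * x) - φ x) 2 mG)
      = F.sup fun γ => eLpNorm (fun x => φ' ((γ : G)⁻¹ * x) - φ' x) 2 mG :=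
    Finset.sup_congr rfl fun γ _ => eLpNorm_congr_ae (hdiff _)
  rw [eLpNorm_congr_ae (hdiff g), hsup]
  set e : G → ℝ≥0∞ := fun h => eLpNorm (fun x => φ' (h⁻¹ * x) - φ' x) 2 mG with he
  have hgK := hΓ₁ hg
  obtain ⟨γ₀, hγ₀mem, hgU⟩ : ∃ γ₀ : Γ, γ₀ ∈ Γ₁ ∧ g ∈ (γ₀ : G) • U := by
    simpa using hgK
  obtain ⟨u, huU, hgu⟩ := hgU
  have htri : e g ≤ e u + e ((γ₀ : G)) := by
    have hsplit : (fun x => φ' (g⁻¹ * x) - φ' x) =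
        fun x => (φ' (g⁻¹ * x) - φ' ((γ₀ : G)⁻¹ * x)) + (φ' ((γ₀ : G)⁻¹ * x) - φ' x) := by
      funext x; ring
    have hm1 : AEStronglyMeasurable (fun x => φ' (g⁻¹ * x) - φ' ((γ₀ : G)⁻¹ * x)) mG :=
      ((hφ'm.comp_measurable (measurable_const_mul g⁻¹)).sub
        (hφ'm.comp_measurable (measurable_const_mul ((γ₀ : G))⁻¹))).aestronglyMeasurable
    have hm2 : AEStronglyMeasurable (fun x => φ' ((γ₀ : G)⁻¹ * x) - φ' x) mG :=
      ((hφ'm.comp_measurable (measurable_const_mul ((γ₀ : G))⁻¹)).sub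
        hφ'm).aestronglyMeasurable
    have h1 : eLpNorm (fun x => φ' (g⁻¹ * x) - φ' ((γ₀ : G)⁻¹ * x)) 2 mG = e u := by
      have hcomp : (fun x => φ' (g⁻¹ * x) - φ' ((γ₀ : G)⁻¹ * x)) =
          (fun y => φ' (u⁻¹ * y) - φ' y) ∘ (fun x => (γ₀ : G)⁻¹ * x) := by
        funext x
        have hgu' : (γ₀ : G) * u = g := hgu
        have hx : g⁻¹ * x = u⁻¹ * ((γ₀ : G)⁻¹ * x) := by rw [← hgu']; group
        simp only [Function.comp_apply, hx]
      rw [he, hcomp]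
      exact eLpNorm_comp_measurePreserving
        ((hφ'm.comp_measurable (measurable_const_mul u⁻¹)).sub hφ'm).aestronglyMeasurable
        (measurePreserving_mul_left mG ((γ₀ : G))⁻¹)
    calc e g = eLpNorm (fun x =>
          (φ' (g⁻¹ * x) - φ' ((γ₀ : G)⁻¹ * x)) + (φ' ((γ₀ : G)⁻¹ * x) - φ' x)) 2 mG := by
          show eLpNorm (fun x => φ' (g⁻¹ * x) - φ' x) 2 mG = _
          rw [hsplit]
      _ ≤ eLpNorm (fun x => φ' (g⁻¹ * x) - φ' ((γ₀ : G)⁻¹ * x)) 2 mG +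
          eLpNorm (fun x => φ' ((γ₀ : G)⁻¹ * x) - φ' x) 2 mG :=
          eLpNorm_add_le hm1 hm2 one_le_two
      _ = e u + e ((γ₀ : G)) := by rw [h1]
  have hLu := hcore φ' hφ'm hφ' u huU
  have heu : e u ≤ (C * (F₀.card : ℝ≥0∞)) ^ ((2 : ℝ)⁻¹) * F.sup fun γ => e ((γ : G)) := by
    have h1 : (∫⁻ x, (‖φ' (u⁻¹ * x) - φ' x‖₊ : ℝ≥0∞) ^ 2 ∂mG) ^ ((2 : ℝ)⁻¹) = e u := by
      rw [LocalGapAux.lint_eq, LocalGapAux.sqrt_sq]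
    have h2 : (∑ γ ∈ F₀, ∫⁻ x, (‖φ' ((γ : G)⁻¹ * x) - φ' x‖₊ : ℝ≥0∞) ^ 2 ∂mG)
        ≤ (F₀.card : ℝ≥0∞) * F₀.sup fun γ => (e ((γ : G))) ^ 2 := by
      have hcongr : ∀ γ ∈ F₀, (∫⁻ x, (‖φ' ((γ : G)⁻¹ * x) - φ' x‖₊ : ℝ≥0∞) ^ 2 ∂mG)
          = e ((γ : G)) ^ 2 := fun γ _ => LocalGapAux.lint_eq mG _
      calc (∑ γ ∈ F₀, ∫⁻ x, (‖φ' ((γ : G)⁻¹ * x) - φ' x‖₊ : ℝ≥0∞) ^ 2 ∂mG)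
          = ∑ γ ∈ F₀, e ((γ : G)) ^ 2 := Finset.sum_congr rfl hcongr
        _ ≤ F₀.card • (F₀.sup fun γ => e ((γ : G)) ^ 2) :=
            Finset.sum_le_card_nsmul _ _ _ (fun γ hγ =>
              Finset.le_sup (f := fun γ : Γ => e ((γ : G)) ^ 2) hγ)
        _ = (F₀.card : ℝ≥0∞) * F₀.sup fun γ => e ((γ : G)) ^ 2 := nsmul_eq_mul _ _
    calc e u = (∫⁻ x, (‖φ' (u⁻¹ * x) - φ' x‖₊ : ℝ≥0∞) ^ 2 ∂mG) ^ ((2 : ℝ)⁻¹) := h1.symm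
      _ ≤ (C * ((F₀.card : ℝ≥0∞) * F₀.sup fun γ => e ((γ : G)) ^ 2)) ^ ((2 : ℝ)⁻¹) :=
          ENNReal.rpow_le_rpow (hLu.trans (mul_le_mul_right h2 C)) (by norm_num)
      _ = ((C * (F₀.card : ℝ≥0∞)) * (F₀.sup fun γ => e ((γ : G)) ^ 2)) ^ ((2 : ℝ)⁻¹) := by
          rw [mul_assoc]
      _ = (C * (F₀.card : ℝ≥0∞)) ^ ((2 : ℝ)⁻¹) *
            ((F₀.sup fun γ => e ((γ : G)) ^ 2)) ^ ((2 : ℝ)⁻¹) :=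
          ENNReal.mul_rpow_of_nonneg _ _ (by norm_num)
      _ = (C * (F₀.card : ℝ≥0∞)) ^ ((2 : ℝ)⁻¹) *
            ((F₀.sup fun γ => e ((γ : G))) ^ 2) ^ ((2 : ℝ)⁻¹) := by
          rw [LocalGapAux.sup_sq]
      _ = (C * (F₀.card : ℝ≥0∞)) ^ ((2 : ℝ)⁻¹) * (F₀.sup fun γ => e ((γ : G))) := by
          rw [LocalGapAux.sqrt_sq]
      _ ≤ (C * (F₀.card : ℝ≥0∞)) ^ ((2 : ℝ)⁻¹) * (F.sup fun γ => e ((γ : G))) :=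
          mul_le_mul_right (Finset.sup_mono Finset.subset_union_left) _
  have hfinal : e g ≤ D * F.sup fun γ => e ((γ : G)) := by
    calc e g ≤ e u + e ((γ₀ : G)) := htri
      _ ≤ (C * (F₀.card : ℝ≥0∞)) ^ ((2 : ℝ)⁻¹) * (F.sup fun γ => e ((γ : G))) +
            F.sup fun γ => e ((γ : G)) :=
          add_le_add heu (Finset.le_sup (f := fun γ : Γ => e ((γ : G)))
            (Finset.mem_union_right _ hγ₀mem))
      _ = D * F.sup fun γ => e ((γ : G)) := by rw [hD, add_mul, one_mul]
  refine hfinal.trans (mul_le_mul_left ?_ _)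
  rw [ENNReal.coe_add, ENNReal.coe_toNNReal hDfin, ENNReal.coe_one]
  exact le_add_right le_rfl
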